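/- Let n = 8 and t ∈ ℝ, and let B_t be the 8×8 real diagonal matrix with diagonal entries (1+4t², 1+4t², 1+4t², 1+4t², 1+3t, 1+3t, 1−3t, 1−3t). Let A_t := B_t − ((tr B_t)/14)·I be the associated Schouten matrix. Then the second elementary symmetric polynomial of the eigenvalues of A_t equals 36/7 + (18/7)t² + (32/7)t⁴; in particular it is ≥ 36/7 with equality if and only if t = 0. (B_t is the Ricci tensor of the product metric g_t on S²×S²×S²×S² in an orthonormal frame, so this states σ₂(g_t) ≥ σ₂(ḡ) = 36/7 with equality iff t = 0.) -/

import Mathlib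

/-- The second elementary symmetric polynomial `Σ_{i<j} λᵢλⱼ` of a family of reals. -/
noncomputable def sigma2 {n : ℕ} (lam : Fin n → ℝ) : ℝ :=
  ∑ p ∈ Finset.univ.filter (fun p : Fin n × Fin n => p.1 < p.2), lam p.1 * lam p.2

/-- The Ricci matrix of the counterexample metric `g_t` on `S²×S²×S²×S²`:
diagonal with entries `1+4t²` (×4), `1+3t` (×2), `1−3t` (×2). -/
noncomputable def ricciCounterexample (t : ℝ) : Matrix (Fin 8) (Fin 8) ℝ :=
  Matrix.diagonal
    ![1 + 4 * t ^ 2, 1 + 4 * t ^ 2, 1 + 4 * t ^ 2, 1 + 4 * t ^ 2,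
      1 + 3 * t, 1 + 3 * t, 1 - 3 * t, 1 - 3 * t]

/-- The associated Schouten matrix `A_t = B_t − (tr B_t/14)·I` (here `2(n−1) = 14`). -/
noncomputable def schoutenCounterexample (t : ℝ) : Matrix (Fin 8) (Fin 8) ℝ :=
  ricciCounterexample t - ((ricciCounterexample t).trace / 14) • (1 : Matrix (Fin 8) (Fin 8) ℝ)

theorem schoutenCounterexample_isHermitian (t : ℝ) :
    (schoutenCounterexample t).IsHermitian := by
  have h1 : (((ricciCounterexample t).trace / 14) •
      (1 : Matrix (Fin 8) (Fin 8) ℝ)).IsHermitian := by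
    simp [Matrix.IsHermitian, Matrix.conjTranspose_smul]
  exact (Matrix.isHermitian_diagonal _).sub h1

open Matrix Finset

lemma sigma2_eq {n : ℕ} (lam : Fin n → ℝ) :
    (∑ p ∈ Finset.univ.filter (fun p : Fin n × Fin n => p.1 < p.2), lam p.1 * lam p.2)
      = ((∑ i, lam i) ^ 2 - ∑ i, lam i ^ 2) / 2 := by
  have hs : (∑ i, lam i) ^ 2 = ∑ p ∈ (univ : Finset (Fin n × Fin n)),
      lam p.1 * lam p.2 := by
    rw [sq, Finset.sum_mul_sum, ← Finset.univ_product_univ, Finset.sum_product]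
  have hsplit : (univ : Finset (Fin n × Fin n)) =
      (univ.filter fun p : Fin n × Fin n => p.1 < p.2) ∪
      ((univ.filter fun p : Fin n × Fin n => p.2 < p.1) ∪
       (univ.filter fun p : Fin n × Fin n => p.1 = p.2)) := by
    ext p
    simp only [mem_univ, mem_union, mem_filter, true_and, true_iff]
    rcases lt_trichotomy p.1 p.2 with h|h|h <;> simp [h]
  have hd1 : Disjoint (univ.filter fun p : Fin n × Fin n => p.1 < p.2)
      ((univ.filter fun p : Fin n × Fin n => p.2 < p.1) ∪
       (univ.filter fun p : Fin n × Fin n => p.1 = p.2)) := by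
    rw [Finset.disjoint_left]
    rintro ⟨a, b⟩ h1 h2
    simp only [mem_union, mem_filter, mem_univ, true_and] at h1 h2
    rcases h2 with h2 | h2
    · exact absurd (h1.trans h2) (lt_irrefl _)
    · exact absurd h2 (ne_of_lt h1)
  have hd2 : Disjoint (univ.filter fun p : Fin n × Fin n => p.2 < p.1)
      (univ.filter fun p : Fin n × Fin n => p.1 = p.2) := by
    rw [Finset.disjoint_left]
    rintro ⟨a, b⟩ h1 h2
    simp only [mem_filter, mem_univ, true_and] at h1 h2
    exact absurd h2.symm (ne_of_lt h1)
  have hgt : (∑ p ∈ univ.filter (fun p : Fin n × Fin n => p.2 < p.1), lam p.1 * lam p.2)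
      = ∑ p ∈ univ.filter (fun p : Fin n × Fin n => p.1 < p.2), lam p.1 * lam p.2 := by
    refine Finset.sum_nbij' (i := Prod.swap) (j := Prod.swap) ?_ ?_ ?_ ?_ ?_ <;>
      simp [mul_comm]
  have heq : (∑ p ∈ univ.filter (fun p : Fin n × Fin n => p.1 = p.2), lam p.1 * lam p.2)
      = ∑ i, lam i ^ 2 := by
    refine Finset.sum_nbij' (i := fun p : Fin n × Fin n => p.1)
      (j := fun i : Fin n => (i, i)) ?_ ?_ ?_ ?_ ?_ <;> simp [sq]
  rw [hsplit, Finset.sum_union hd1, Finset.sum_union hd2, hgt, heq] at hs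
  linarith

lemma trace_eigen {m : ℕ} {A : Matrix (Fin m) (Fin m) ℝ} (hA : A.IsHermitian) :
    ∑ i, hA.eigenvalues i = A.trace := by
  conv_rhs => rw [hA.spectral_theorem, Unitary.conjStarAlgAut_apply]
  rw [Matrix.trace_mul_cycle]
  simp [Matrix.trace_diagonal, ← Matrix.star_eq_conjTranspose]

lemma trace_sq_eigen {m : ℕ} {A : Matrix (Fin m) (Fin m) ℝ} (hA : A.IsHermitian) :
    ∑ i, hA.eigenvalues i ^ 2 = (A * A).trace := by
  set U : Matrix (Fin m) (Fin m) ℝ := (hA.eigenvectorUnitary : Matrix (Fin m) (Fin m) ℝ)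
  set D : Matrix (Fin m) (Fin m) ℝ := diagonal (RCLike.ofReal ∘ hA.eigenvalues)
  have hsU : star U * U = 1 := by
    exact (Matrix.mem_unitaryGroup_iff').mp hA.eigenvectorUnitary.2
  have hAA : A * A = U * (D * D) * star U := by
    conv_lhs => rw [hA.spectral_theorem, Unitary.conjStarAlgAut_apply]
    simp only [Matrix.mul_assoc]
    rw [← Matrix.mul_assoc (star U) U, hsU, Matrix.one_mul]
  rw [hAA, Matrix.trace_mul_cycle, ← Matrix.mul_assoc, hsU, Matrix.one_mul]
  simp [D, Matrix.diagonal_mul_diagonal, Matrix.trace_diagonal, sq]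

lemma vec8_0 (a b c d e f g h : ℝ) : ![a,b,c,d,e,f,g,h] 0 = a := rfl
lemma vec8_1 (a b c d e f g h : ℝ) : ![a,b,c,d,e,f,g,h] 1 = b := rfl
lemma vec8_2 (a b c d e f g h : ℝ) : ![a,b,c,d,e,f,g,h] 2 = c := rfl
lemma vec8_3 (a b c d e f g h : ℝ) : ![a,b,c,d,e,f,g,h] 3 = d := rfl
lemma vec8_4 (a b c d e f g h : ℝ) : ![a,b,c,d,e,f,g,h] 4 = e := rfl
lemma vec8_5 (a b c d e f g h : ℝ) : ![a,b,c,d,e,f,g,h] 5 = f := rfl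
lemma vec8_6 (a b c d e f g h : ℝ) : ![a,b,c,d,e,f,g,h] 6 = g := rfl
lemma vec8_7 (a b c d e f g h : ℝ) : ![a,b,c,d,e,f,g,h] 7 = h := rfl

lemma schouten_diag (t : ℝ) :
    schoutenCounterexample t = Matrix.diagonal
      ![(3 + 20 * t ^ 2) / 7, (3 + 20 * t ^ 2) / 7, (3 + 20 * t ^ 2) / 7, (3 + 20 * t ^ 2) / 7,
        (3 + 21 * t - 8 * t ^ 2) / 7, (3 + 21 * t - 8 * t ^ 2) / 7,
        (3 - 21 * t - 8 * t ^ 2) / 7, (3 - 21 * t - 8 * t ^ 2) / 7] := by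
  have htr : (ricciCounterexample t).trace = 8 + 16 * t ^ 2 := by
    simp [ricciCounterexample, Matrix.trace_diagonal, Fin.sum_univ_eight, vec8_0, vec8_1, vec8_2, vec8_3, vec8_4, vec8_5, vec8_6, vec8_7]
    ring
  rw [schoutenCounterexample, htr]
  ext i j
  fin_cases i <;> fin_cases j <;>
    simp [ricciCounterexample, Matrix.diagonal_apply, Matrix.one_apply, vec8_0, vec8_1, vec8_2, vec8_3, vec8_4, vec8_5, vec8_6, vec8_7] <;> ring

theorem sigma2_counterexample_trace (t : ℝ) :
    (schoutenCounterexample t).trace = (24 + 48 * t ^ 2) / 7 ∧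
    ((schoutenCounterexample t) * (schoutenCounterexample t)).trace
      = (4 * ((3 + 20 * t ^ 2) / 7) ^ 2 + 2 * ((3 + 21 * t - 8 * t ^ 2) / 7) ^ 2
        + 2 * ((3 - 21 * t - 8 * t ^ 2) / 7) ^ 2) := by
  constructor
  · rw [schouten_diag, Matrix.trace_diagonal]
    simp [Fin.sum_univ_eight, vec8_0, vec8_1, vec8_2, vec8_3, vec8_4, vec8_5, vec8_6, vec8_7]; ring
  · rw [schouten_diag, Matrix.diagonal_mul_diagonal, Matrix.trace_diagonal]
    simp [Fin.sum_univ_eight, vec8_0, vec8_1, vec8_2, vec8_3, vec8_4, vec8_5, vec8_6, vec8_7]; ring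

/-- `σ₂` of the eigenvalues of the Schouten matrix of the counterexample
Ricci matrix equals `36/7 + (18/7)t² + (32/7)t⁴`; in particular it is `≥ 36/7` with
equality iff `t = 0`. -/
theorem sigma2_counterexample (t : ℝ) :
    sigma2 (schoutenCounterexample_isHermitian t).eigenvalues
      = 36 / 7 + (18 / 7) * t ^ 2 + (32 / 7) * t ^ 4 ∧
    36 / 7 ≤ sigma2 (schoutenCounterexample_isHermitian t).eigenvalues ∧
    (sigma2 (schoutenCounterexample_isHermitian t).eigenvalues = 36 / 7 ↔ t = 0) := by
  have h1 := trace_eigen (schoutenCounterexample_isHermitian t)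
  have h2 := trace_sq_eigen (schoutenCounterexample_isHermitian t)
  obtain ⟨ht, ht2⟩ := sigma2_counterexample_trace t
  have hval : sigma2 (schoutenCounterexample_isHermitian t).eigenvalues
      = 36 / 7 + (18 / 7) * t ^ 2 + (32 / 7) * t ^ 4 := by
    rw [sigma2, sigma2_eq, h1, h2, ht, ht2]; ring
  refine ⟨hval, ?_, ?_⟩
  · rw [hval]; nlinarith [sq_nonneg t, sq_nonneg (t ^ 2)]
  · rw [hval]
    constructor
    · intro h
      have ht2' : t ^ 2 = 0 := by nlinarith [sq_nonneg t, sq_nonneg (t ^ 2)]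
      exact pow_eq_zero_iff (by norm_num) |>.mp ht2'
    · intro h; rw [h]; ring
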